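/- Let $p > 1$ and let $u : [a,b] \to \mathbb{R}$ be continuously differentiable. Then for every $\delta > 0$: $|u(a)|^p + |u(b)|^p \le p\,\delta^p \int_a^b |u'(x)|^p dx + \Big(\tfrac{2}{b-a} + p(p-1)\delta^{-p/(p-1)}\Big)\int_a^b |u(x)|^p dx$. -/

import Mathlib

lemma young_aux {p δ A B : ℝ} (hp : 1 < p) (hδ : 0 < δ) (hA : 0 ≤ A) (hB : 0 ≤ B) :
    p * (A ^ (p - 1) * B) ≤ p * δ ^ p * B ^ p + p * (p - 1) * δ ^ (-(p / (p - 1))) * A ^ p := by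
  set q : ℝ := p / (p - 1) with hq
  have hp0 : (0:ℝ) < p := by linarith
  have hp1 : (0:ℝ) < p - 1 := by linarith
  have hpq : q.HolderConjugate p := (Real.HolderConjugate.conjExponent hp).symm
  have h := Real.young_inequality_of_nonneg (a := A ^ (p - 1) * δ⁻¹) (b := δ * B)
    (by positivity) (by positivity) hpq
  have hL : A ^ (p - 1) * δ⁻¹ * (δ * B) = A ^ (p - 1) * B := by
    field_simp
  have hq0 : (0:ℝ) < q := by positivity
  have h1 : (A ^ (p - 1) * δ⁻¹) ^ q = A ^ p * δ ^ (-q) := by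
    rw [Real.mul_rpow (by positivity) (by positivity),
      ← Real.rpow_mul hA, show (p - 1) * q = p by rw [hq]; field_simp,
      Real.inv_rpow hδ.le, ← Real.rpow_neg hδ.le]
  have h2 : (δ * B) ^ p = δ ^ p * B ^ p := Real.mul_rpow hδ.le hB
  rw [hL, h1, h2] at h
  have hpq' : p / q = p - 1 := by rw [hq]; field_simp
  have hApos : 0 ≤ A ^ p := Real.rpow_nonneg hA p
  have hBpos : 0 ≤ B ^ p := Real.rpow_nonneg hB p
  have hD : 0 ≤ δ ^ (-q) := Real.rpow_nonneg hδ.le _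
  have hE : 0 ≤ δ ^ p := Real.rpow_nonneg hδ.le _
  have h3 : p * (A ^ (p - 1) * B) ≤ (p - 1) * (A ^ p * δ ^ (-q)) + δ ^ p * B ^ p := by
    have := mul_le_mul_of_nonneg_left h hp0.le
    calc p * (A ^ (p - 1) * B) ≤ p * (A ^ p * δ ^ (-q) / q + δ ^ p * B ^ p / p) := this
      _ = (p / q) * (A ^ p * δ ^ (-q)) + (p / p) * (δ ^ p * B ^ p) := by ring
      _ = (p - 1) * (A ^ p * δ ^ (-q)) + δ ^ p * B ^ p := by
          rw [hpq', div_self hp0.ne']; ring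
  have h4 : (p - 1) * (A ^ p * δ ^ (-q)) + δ ^ p * B ^ p
      ≤ p * δ ^ p * B ^ p + p * (p - 1) * δ ^ (-q) * A ^ p := by
    nlinarith [mul_nonneg (mul_nonneg (mul_nonneg hp1.le hp1.le) hD) hApos,
      mul_nonneg (mul_nonneg hp1.le hE) hBpos]
  linarith

theorem one_dim_trace (p a b : ℝ) (hp : 1 < p) (hab : a < b) (u u' : ℝ → ℝ)
    (hu : ∀ x ∈ Set.Icc a b, HasDerivAt u (u' x) x)
    (hu' : ContinuousOn u' (Set.Icc a b)) :
    ∀ δ : ℝ, 0 < δ →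
      |u a| ^ p + |u b| ^ p ≤ p * δ ^ p * (∫ x in a..b, |u' x| ^ p)
        + (2 / (b - a) + p * (p - 1) * δ ^ (-(p / (p - 1))))
          * ∫ x in a..b, |u x| ^ p := by
  intro δ hδ
  have hba : (0:ℝ) < b - a := sub_pos.mpr hab
  set μ : ℝ → ℝ := fun x => (2 * x - a - b) / (b - a) with hμ
  set v : ℝ → ℝ := fun x => p * |u x| ^ (p - 2) * u x * u' x with hv
  set F : ℝ → ℝ := fun x => |u x| ^ p * μ x with hF
  set G : ℝ → ℝ := fun x => v x * μ x + |u x| ^ p * (2 / (b - a)) with hG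
  set C : ℝ := 2 / (b - a) + p * (p - 1) * δ ^ (-(p / (p - 1))) with hC
  set g : ℝ → ℝ := fun x => p * δ ^ p * |u' x| ^ p + C * |u x| ^ p with hg
  have huIcc : Set.uIcc a b = Set.Icc a b := Set.uIcc_of_le hab.le
  -- continuity facts
  have hucont : ContinuousOn u (Set.Icc a b) :=
    fun x hx => (hu x hx).continuousAt.continuousWithinAt
  have hwc : Continuous (fun t : ℝ => p * |t| ^ (p - 2) * t) := by
    have h1 : Continuous (deriv (fun t : ℝ => ‖t‖ ^ p)) :=
      (contDiff_norm_rpow (E := ℝ) hp).continuous_deriv le_rfl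
    have h2 : (fun t : ℝ => p * |t| ^ (p - 2) * t) = deriv (fun t : ℝ => ‖t‖ ^ p) := by
      funext t
      rw [(hasDerivAt_norm_rpow t hp).deriv, Real.norm_eq_abs]
    rw [h2]; exact h1
  have hvcont : ContinuousOn v (Set.Icc a b) := by
    have : ContinuousOn (fun x => p * |u x| ^ (p - 2) * u x) (Set.Icc a b) :=
      hwc.comp_continuousOn hucont
    exact this.mul hu'
  have hμcont : Continuous μ := by
    apply Continuous.div_const
    fun_prop
  have hup : ContinuousOn (fun x => |u x| ^ p) (Set.Icc a b) :=
    (hucont.abs).rpow_const (fun x _ => Or.inr (by linarith))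
  have hu'p : ContinuousOn (fun x => |u' x| ^ p) (Set.Icc a b) :=
    (hu'.abs).rpow_const (fun x _ => Or.inr (by linarith))
  have hGcont : ContinuousOn G (Set.Icc a b) :=
    (hvcont.mul hμcont.continuousOn).add (hup.mul continuousOn_const)
  have hgcont : ContinuousOn g (Set.Icc a b) :=
    (continuousOn_const.mul hu'p).add (continuousOn_const.mul hup)
  have hGint : IntervalIntegrable G MeasureTheory.volume a b :=
    (huIcc ▸ hGcont).intervalIntegrable
  have hgint : IntervalIntegrable g MeasureTheory.volume a b :=
    (huIcc ▸ hgcont).intervalIntegrable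
  have hu'pint : IntervalIntegrable (fun x => |u' x| ^ p) MeasureTheory.volume a b :=
    (huIcc ▸ hu'p).intervalIntegrable
  have hupint : IntervalIntegrable (fun x => |u x| ^ p) MeasureTheory.volume a b :=
    (huIcc ▸ hup).intervalIntegrable
  -- derivative of F
  have hFd : ∀ x ∈ Set.uIcc a b, HasDerivAt F (G x) x := by
    intro x hx
    rw [huIcc] at hx
    have h1 : HasDerivAt (fun y => |u y| ^ p) (v x) x := by
      have := (hasDerivAt_abs_rpow (u x) hp).comp x (hu x hx)
      simpa [hv, mul_assoc, Function.comp_def] using this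
    have h2 : HasDerivAt μ (2 / (b - a)) x := by
      have : HasDerivAt (fun y : ℝ => (2 * y - a - b) / (b - a)) ((2 * 1) / (b - a)) x := by
        exact ((((hasDerivAt_id x).const_mul 2).sub_const a).sub_const b).div_const (b - a)
      simpa using this
    have := h1.mul h2
    simpa [hF, hG, Pi.mul_def] using this
  -- FTC
  have hFTC : ∫ x in a..b, G x = F b - F a :=
    intervalIntegral.integral_eq_sub_of_hasDerivAt hFd hGint
  have hμa : μ a = -1 := by
    rw [hμ]; field_simp; ring
  have hμb : μ b = 1 := by
    rw [hμ]; field_simp; ring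
  have hFab : F b - F a = |u b| ^ p + |u a| ^ p := by
    rw [hF]; simp only [hμa, hμb]; ring
  -- pointwise bound G ≤ g on Icc
  have hpt : ∀ x ∈ Set.Icc a b, G x ≤ g x := by
    intro x hx
    have hμle : |μ x| ≤ 1 := by
      rw [hμ, abs_div, abs_of_pos hba, div_le_one hba, abs_le]
      constructor <;> [linarith [hx.1, hx.2]; linarith [hx.1, hx.2]]
    have habs : |u x| ^ (p - 2) * |u x| = |u x| ^ (p - 1) := by
      by_cases h : u x = 0
      · rw [h]; simp [Real.zero_rpow (show p - 1 ≠ 0 by linarith)]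
      · rw [show p - 1 = (p - 2) + 1 by ring, Real.rpow_add_one (abs_ne_zero.mpr h)]
    have hvabs : |v x| = p * (|u x| ^ (p - 1) * |u' x|) := by
      rw [hv]
      rw [abs_mul, abs_mul, abs_mul, abs_of_pos (show (0:ℝ) < p by linarith),
        abs_of_nonneg (Real.rpow_nonneg (abs_nonneg _) _), ← habs]
      ring
    have h1 : v x * μ x ≤ p * (|u x| ^ (p - 1) * |u' x|) := by
      calc v x * μ x ≤ |v x * μ x| := le_abs_self _
        _ = |v x| * |μ x| := abs_mul _ _
        _ ≤ |v x| * 1 := by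
            apply mul_le_mul_of_nonneg_left hμle (abs_nonneg _)
        _ = p * (|u x| ^ (p - 1) * |u' x|) := by rw [mul_one, hvabs]
    have h2 := young_aux (A := |u x|) (B := |u' x|) hp hδ (abs_nonneg _) (abs_nonneg _)
    rw [hG, hg, hC]
    have : v x * μ x ≤ p * δ ^ p * |u' x| ^ p + p * (p - 1) * δ ^ (-(p / (p - 1))) * |u x| ^ p :=
      le_trans h1 h2
    nlinarith [this]
  have hmono : ∫ x in a..b, G x ≤ ∫ x in a..b, g x :=
    intervalIntegral.integral_mono_on hab.le hGint hgint hpt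
  have hsplit : ∫ x in a..b, g x
      = p * δ ^ p * (∫ x in a..b, |u' x| ^ p) + C * ∫ x in a..b, |u x| ^ p := by
    rw [hg]
    rw [intervalIntegral.integral_add (hu'pint.const_mul _) (hupint.const_mul _),
      intervalIntegral.integral_const_mul, intervalIntegral.integral_const_mul]
  have : |u b| ^ p + |u a| ^ p ≤ p * δ ^ p * (∫ x in a..b, |u' x| ^ p)
      + C * ∫ x in a..b, |u x| ^ p := by
    rw [← hsplit, ← hFab, ← hFTC]; exact hmono
  rw [hC] at this
  linarith
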